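/- Let A be a locally finite subset of a Banach space Z containing 0, with Zᵢ = span{a ∈ A : ‖a‖ ≤ 2ⁱ} and Sᵢ = {a ∈ A : 2^{i−1} ≤ ‖a‖ ≤ 2ⁱ}. Let Y be a Banach space with a Schauder decomposition (Yᵢ) satisfying ‖yⱼ‖ ≤ ‖Σᵢ yᵢ‖ for yᵢ ∈ Yᵢ, and let Eᵢ : Zᵢ → Y be linear isometries onto Yᵢ (composed with inclusion). Define φ : A → Y by φ(a) = ((2ⁱ−‖a‖)/2^{i−1}) Eᵢ(a) + ((‖a‖−2^{i−1})/2^{i−1}) E_{i+1}(a) for a ∈ Sᵢ. Then φ is well defined (consistent when ‖a‖ = 2ⁱ) and is a Lipschitz embedding: there are constants 0 < c ≤ C < ∞ with c‖a−b‖ ≤ ‖φ(a)−φ(b)‖ ≤ C‖a−b‖ for all a,b ∈ A. -/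

import Mathlib

/-- Lower-bound helper: each of four components (in distinct summands of a monotone
Schauder-type decomposition) has norm at most the norm of the sum. -/
lemma four_comp_norm_le {Y : Type*} [NormedAddCommGroup Y] [NormedSpace ℝ Y]
    (Ysub : ℤ → Submodule ℝ Y)
    (hmono : ∀ y : ℤ → Y, (∀ i, y i ∈ Ysub i) → Summable y →
      ∀ j : ℤ, ‖y j‖ ≤ ‖∑' i, y i‖)
    (k1 k2 k3 k4 : ℤ) (h12 : k1 < k2) (h23 : k2 < k3) (h34 : k3 < k4)
    (u v w x : Y) (hu : u ∈ Ysub k1) (hv : v ∈ Ysub k2) (hw : w ∈ Ysub k3)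
    (hx : x ∈ Ysub k4) :
    ‖u‖ ≤ ‖u + v + w + x‖ ∧ ‖v‖ ≤ ‖u + v + w + x‖ ∧ ‖w‖ ≤ ‖u + v + w + x‖ ∧
      ‖x‖ ≤ ‖u + v + w + x‖ := by
  classical
  set y : ℤ → Y := fun k =>
    if k = k1 then u else if k = k2 then v else if k = k3 then w else
      if k = k4 then x else 0 with hy
  have hne12 : k1 ≠ k2 := h12.ne
  have hne13 : k1 ≠ k3 := (h12.trans h23).ne
  have hne14 : k1 ≠ k4 := (h12.trans (h23.trans h34)).ne
  have hne23 : k2 ≠ k3 := h23.ne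
  have hne24 : k2 ≠ k4 := (h23.trans h34).ne
  have hne34 : k3 ≠ k4 := h34.ne
  have hmem : ∀ k, y k ∈ Ysub k := by
    intro k
    simp only [hy]
    split_ifs with h1 h2 h3 h4
    · subst h1; exact hu
    · subst h2; exact hv
    · subst h3; exact hw
    · subst h4; exact hx
    · exact zero_mem _
  have hsupp : ∀ k ∉ ({k1, k2, k3, k4} : Finset ℤ), y k = 0 := by
    intro k hk
    simp only [Finset.mem_insert, Finset.mem_singleton, not_or] at hk
    simp [hy, hk.1, hk.2.1, hk.2.2.1, hk.2.2.2]
  have hsum : Summable y := summable_of_ne_finset_zero hsupp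
  have htsum : ∑' k, y k = u + v + w + x := by
    rw [tsum_eq_sum hsupp]
    rw [Finset.sum_insert (by simp [hne12, hne13, hne14]),
      Finset.sum_insert (by simp [hne23, hne24]),
      Finset.sum_insert (by simp [hne34]), Finset.sum_singleton]
    simp only [hy, if_pos rfl, if_neg hne12.symm, if_neg hne13.symm, if_neg hne14.symm,
      if_neg hne23.symm, if_neg hne24.symm, if_neg hne34.symm]
    abel
  have key : ∀ j, ‖y j‖ ≤ ‖u + v + w + x‖ := by
    intro j
    have := hmono y hmem hsum j
    rwa [htsum] at this
  have e1 := key k1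
  have e2 := key k2
  have e3 := key k3
  have e4 := key k4
  simp only [hy, if_pos rfl, if_neg hne12.symm, if_neg hne13.symm, if_neg hne14.symm,
    if_neg hne23.symm, if_neg hne24.symm, if_neg hne34.symm] at e1 e2 e3 e4
  exact ⟨e1, e2, e3, e4⟩

/-- The gluing construction: let `A` be a locally finite subset of a Banach space `Z`
containing `0`, `Zᵢ = span{a ∈ A : ‖a‖ ≤ 2ⁱ}`, and let `Y` be a Banach space with a
monotone Schauder decomposition `(Yᵢ)` together with linear isometries
`Eᵢ : Zᵢ → Y` onto `Yᵢ`.  Then the map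
`φ(a) = ((2ⁱ−‖a‖)/2^{i−1})Eᵢ(a) + ((‖a‖−2^{i−1})/2^{i−1})E_{i+1}(a)` for
`2^{i−1} ≤ ‖a‖ ≤ 2ⁱ` is well defined and bi-Lipschitz on `A`. -/
theorem gluing_lipschitz_embedding {Z Y : Type*}
    [NormedAddCommGroup Z] [NormedSpace ℝ Z] [CompleteSpace Z]
    [NormedAddCommGroup Y] [NormedSpace ℝ Y] [CompleteSpace Y]
    (A : Set Z) (hA : ∀ r : ℝ, (A ∩ Metric.closedBall 0 r).Finite) (h0 : (0 : Z) ∈ A)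
    (Zsub : ℤ → Submodule ℝ Z)
    (hZsub : ∀ i : ℤ, Zsub i = Submodule.span ℝ {a : Z | a ∈ A ∧ ‖a‖ ≤ (2:ℝ) ^ i})
    (Ysub : ℤ → Submodule ℝ Y)
    (hmono : ∀ y : ℤ → Y, (∀ i, y i ∈ Ysub i) → Summable y →
      ∀ j : ℤ, ‖y j‖ ≤ ‖∑' i, y i‖)
    (E : ∀ i : ℤ, (Zsub i) →ₗ[ℝ] Y)
    (hEiso : ∀ (i : ℤ) (z : Zsub i), ‖E i z‖ = ‖(z : Z)‖)
    (hErange : ∀ (i : ℤ) (z : Zsub i), E i z ∈ Ysub i)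
    (hEsurj : ∀ i : ℤ, ∀ y ∈ Ysub i, ∃ z : Zsub i, E i z = y) :
    ∃ φ : Z → Y,
      φ 0 = 0 ∧
      (∀ a : Z, a ∈ A → ∀ i : ℤ, (2:ℝ) ^ (i - 1) ≤ ‖a‖ → ‖a‖ ≤ (2:ℝ) ^ i →
        ∀ (ha : a ∈ Zsub i) (ha' : a ∈ Zsub (i + 1)),
          φ a = (((2:ℝ) ^ i - ‖a‖) / (2:ℝ) ^ (i - 1)) • E i ⟨a, ha⟩
              + ((‖a‖ - (2:ℝ) ^ (i - 1)) / (2:ℝ) ^ (i - 1)) • E (i + 1) ⟨a, ha'⟩) ∧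
      ∃ c C : ℝ, 0 < c ∧ c ≤ C ∧
        ∀ a ∈ A, ∀ b ∈ A,
          c * ‖a - b‖ ≤ ‖φ a - φ b‖ ∧ ‖φ a - φ b‖ ≤ C * ‖a - b‖ := by
  classical
  have hpow_pos : ∀ i : ℤ, (0:ℝ) < 2 ^ i := fun i => zpow_pos (by norm_num) i
  have hpow_le : ∀ {m n : ℤ}, m ≤ n → (2:ℝ) ^ m ≤ (2:ℝ) ^ n := fun {m n} h =>
    zpow_le_zpow_right₀ (by norm_num) h
  have hdouble : ∀ i : ℤ, (2:ℝ) ^ i = 2 ^ (i - 1) * 2 := by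
    intro i
    rw [← zpow_add_one₀ (by norm_num : (2:ℝ) ≠ 0) (i - 1), sub_add_cancel]
  have memZ : ∀ (i : ℤ) (z : Z), z ∈ A → ‖z‖ ≤ (2:ℝ) ^ i → z ∈ Zsub i := by
    intro i z hz hn
    rw [hZsub i]
    exact Submodule.subset_span ⟨hz, hn⟩
  set ι : Z → ℤ := fun z => Int.clog 2 ‖z‖ with hιdef
  have hub : ∀ z : Z, ‖z‖ ≤ (2:ℝ) ^ (ι z) := by
    intro z
    have := Int.self_le_zpow_clog (b := 2) (R := ℝ) (by norm_num) ‖z‖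
    simpa using this
  have hlbs : ∀ z : Z, z ≠ 0 → (2:ℝ) ^ (ι z - 1) < ‖z‖ := by
    intro z hz
    have := Int.zpow_pred_clog_lt_self (b := 2) (R := ℝ) (by norm_num)
      (norm_pos_iff.mpr hz)
    simpa using this
  set lam : Z → ℝ := fun z => ((2:ℝ) ^ (ι z) - ‖z‖) / (2:ℝ) ^ (ι z - 1) with hlamdef
  set mu : Z → ℝ := fun z => (‖z‖ - (2:ℝ) ^ (ι z - 1)) / (2:ℝ) ^ (ι z - 1) with hmudef
  have hlam_nonneg : ∀ z : Z, 0 ≤ lam z :=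
    fun z => div_nonneg (by linarith [hub z]) (hpow_pos _).le
  have hmu_nonneg : ∀ z : Z, z ≠ 0 → 0 ≤ mu z :=
    fun z hz => div_nonneg (by linarith [hlbs z hz]) (hpow_pos _).le
  have hsum1 : ∀ z : Z, lam z + mu z = 1 := by
    intro z
    have h := hdouble (ι z)
    have hne := (hpow_pos (ι z - 1)).ne'
    simp only [hlamdef, hmudef]
    rw [← add_div, div_eq_one_iff_eq hne]
    linarith
  set φ : Z → Y := fun z => if h : z ∈ A ∧ z ≠ 0 then
      lam z • E (ι z) ⟨z, memZ _ z h.1 (hub z)⟩ +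
        mu z • E (ι z + 1) ⟨z, memZ _ z h.1 ((hub z).trans (hpow_le (by omega)))⟩
    else 0 with hφdef
  have hφzero : ∀ z : Z, ¬(z ∈ A ∧ z ≠ 0) → φ z = 0 := by
    intro z h
    simp only [hφdef]
    rw [dif_neg h]
  have hφa : ∀ z : Z, z ∈ A → z ≠ 0 → ∀ k : ℤ, ι z = k →
      ∀ (p : z ∈ Zsub k) (q : z ∈ Zsub (k + 1)),
      φ z = lam z • E k ⟨z, p⟩ + mu z • E (k + 1) ⟨z, q⟩ := by
    intro z hz hz0 k hk p q
    subst hk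
    simp only [hφdef]
    rw [dif_pos ⟨hz, hz0⟩]
  refine ⟨φ, hφzero 0 (by simp), ?_, ?_⟩
  · -- the formula
    intro a haA i h1 h2 ha ha'
    have ha0 : a ≠ 0 := by
      intro h
      rw [h, norm_zero] at h1
      exact absurd h1 (not_le.mpr (hpow_pos _))
    have hna : 0 < ‖a‖ := norm_pos_iff.mpr ha0
    have hi1 : ι a ≤ i := by
      have := (Int.le_zpow_iff_clog_le (b := 2) (R := ℝ) (by norm_num) hna).mp
        (by simpa using h2)
      simpa [hιdef] using this
    have hi2 : i - 1 ≤ ι a := by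
      by_contra hcon
      push_neg at hcon
      have : (2:ℝ) ^ (ι a) < 2 ^ (i - 1) :=
        zpow_lt_zpow_right₀ (by norm_num) (by omega)
      linarith [hub a, h1]
    rcases (by omega : i = ι a ∨ i = ι a + 1) with hi | hi
    · subst hi
      rw [hφa a haA ha0 (ι a) rfl ha ha']
    · subst hi
      have heq : ‖a‖ = (2:ℝ) ^ (ι a) := le_antisymm (hub a) (by
        have he : (ι a + 1) - 1 = ι a := by omega
        rw [he] at h1
        exact h1)
      have q : a ∈ Zsub (ι a + 1) := ha
      rw [hφa a haA ha0 (ι a) rfl (memZ _ a haA (hub a)) q]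
      have hl : lam a = 0 := by
        simp only [hlamdef]
        rw [heq, sub_self, zero_div]
      have hm : mu a = 1 := by
        simp only [hmudef]
        rw [heq, hdouble (ι a), div_eq_one_iff_eq (hpow_pos (ι a - 1)).ne']
        ring
      have hc1 : ((2:ℝ) ^ (ι a + 1) - ‖a‖) / (2:ℝ) ^ (ι a + 1 - 1) = 1 := by
        have he : (ι a + 1) - 1 = ι a := by omega
        rw [he, heq, div_eq_one_iff_eq (hpow_pos (ι a)).ne',
          zpow_add_one₀ (by norm_num : (2:ℝ) ≠ 0)]
        ring
      have hc2 : (‖a‖ - (2:ℝ) ^ (ι a + 1 - 1)) / (2:ℝ) ^ (ι a + 1 - 1) = 0 := by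
        have he : (ι a + 1) - 1 = ι a := by omega
        rw [he, heq, sub_self, zero_div]
      rw [hl, hm, hc1, hc2]
      simp
  · -- bi-Lipschitz
    refine ⟨1/3, 11, by norm_num, by norm_num, ?_⟩
    -- upper bound for a single point
    have hφnorm : ∀ b : Z, b ∈ A → ‖φ b‖ ≤ ‖b‖ := by
      intro b hb
      by_cases hb0 : b = 0
      · subst hb0
        rw [hφzero 0 (by simp)]
        simp
      · have pb : b ∈ Zsub (ι b) := memZ _ b hb (hub b)
        have pb' : b ∈ Zsub (ι b + 1) := memZ _ b hb ((hub b).trans (hpow_le (by omega)))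
        rw [hφa b hb hb0 (ι b) rfl pb pb']
        have t1 := norm_add_le (lam b • E (ι b) ⟨b, pb⟩) (mu b • E (ι b + 1) ⟨b, pb'⟩)
        have g1 : ‖lam b • E (ι b) ⟨b, pb⟩‖ = lam b * ‖b‖ := by
          rw [norm_smul, Real.norm_eq_abs, abs_of_nonneg (hlam_nonneg b), hEiso]
        have g2 : ‖mu b • E (ι b + 1) ⟨b, pb'⟩‖ = mu b * ‖b‖ := by
          rw [norm_smul, Real.norm_eq_abs, abs_of_nonneg (hmu_nonneg b hb0), hEiso]
        have g3 : lam b * ‖b‖ + mu b * ‖b‖ = ‖b‖ := by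
          rw [← add_mul, hsum1 b, one_mul]
        linarith
    -- lower bound for a single point
    have lower2 : ∀ b : Z, b ∈ A → b ≠ 0 → ‖b‖ ≤ 2 * ‖φ b‖ := by
      intro b hb hb0
      have pb : b ∈ Zsub (ι b) := memZ _ b hb (hub b)
      have pb' : b ∈ Zsub (ι b + 1) := memZ _ b hb ((hub b).trans (hpow_le (by omega)))
      have hφb_eq := hφa b hb hb0 (ι b) rfl pb pb'
      set u := E (ι b) (lam b • (⟨b, pb⟩ : Zsub (ι b))) with hu
      set v := E (ι b + 1) (mu b • (⟨b, pb'⟩ : Zsub (ι b + 1))) with hv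
      have hdiff : φ b = u + v := by
        rw [hφb_eq, hu, hv]
        simp only [map_smul]
      obtain ⟨e1, e2, -, -⟩ := four_comp_norm_le Ysub hmono (ι b) (ι b + 1) (ι b + 2)
        (ι b + 3) (by omega) (by omega) (by omega) u v 0 0 (hErange _ _) (hErange _ _)
        (zero_mem _) (zero_mem _)
      rw [add_zero, add_zero] at e1 e2
      have hun : ‖u‖ = lam b * ‖b‖ := by
        rw [hu, hEiso]
        rw [show ((lam b • (⟨b, pb⟩ : Zsub (ι b)) : Zsub (ι b)) : Z) = lam b • b from rfl]
        rw [norm_smul, Real.norm_eq_abs, abs_of_nonneg (hlam_nonneg b)]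
      have hvn : ‖v‖ = mu b * ‖b‖ := by
        rw [hv, hEiso]
        rw [show ((mu b • (⟨b, pb'⟩ : Zsub (ι b + 1)) : Zsub (ι b + 1)) : Z)
          = mu b • b from rfl]
        rw [norm_smul, Real.norm_eq_abs, abs_of_nonneg (hmu_nonneg b hb0)]
      have g3 : lam b * ‖b‖ + mu b * ‖b‖ = ‖b‖ := by
        rw [← add_mul, hsum1 b, one_mul]
      rw [hdiff]
      linarith
    -- the main two-point estimate, assuming `ι a ≤ ι b`
    have main : ∀ a : Z, a ∈ A → ∀ b : Z, b ∈ A → a ≠ 0 → b ≠ 0 → ι a ≤ ι b →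
        (1/3 : ℝ) * ‖a - b‖ ≤ ‖φ a - φ b‖ ∧ ‖φ a - φ b‖ ≤ 11 * ‖a - b‖ := by
      intro a ha b hb ha0 hb0 hij
      have pa : a ∈ Zsub (ι a) := memZ _ a ha (hub a)
      have pa' : a ∈ Zsub (ι a + 1) := memZ _ a ha ((hub a).trans (hpow_le (by omega)))
      have hφa_eq := hφa a ha ha0 (ι a) rfl pa pa'
      have h2a : ‖a‖ ≤ (2:ℝ) ^ (ι a) := hub a
      have h1a : (2:ℝ) ^ (ι a - 1) < ‖a‖ := hlbs a ha0
      have h2b : ‖b‖ ≤ (2:ℝ) ^ (ι b) := hub b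
      have h1b : (2:ℝ) ^ (ι b - 1) < ‖b‖ := hlbs b hb0
      have la0 : 0 ≤ lam a := hlam_nonneg a
      have lb0 : 0 ≤ lam b := hlam_nonneg b
      have ma0 : 0 ≤ mu a := hmu_nonneg a ha0
      have mb0 : 0 ≤ mu b := hmu_nonneg b hb0
      have hsa := hsum1 a
      have hsb := hsum1 b
      have habs : |‖a‖ - ‖b‖| ≤ ‖a - b‖ := abs_norm_sub_norm_le a b
      have hnab : ‖b‖ - ‖a‖ ≤ ‖a - b‖ := by
        have h' : ‖b‖ - ‖a‖ ≤ |‖a‖ - ‖b‖| := by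
          rw [abs_sub_comm]
          exact le_abs_self _
        linarith
      have ht0 : (0:ℝ) ≤ ‖a - b‖ := norm_nonneg _
      have hd := hpow_pos (ι a - 1)
      have hD := hpow_pos (ι a)
      have hDa := hdouble (ι a)
      rcases (by omega : ι b = ι a ∨ ι b = ι a + 1 ∨ ι a + 2 ≤ ι b) with hc | hc | hc
      · -- same shell
        have pb : b ∈ Zsub (ι a) := memZ _ b hb (by rw [← hc]; exact h2b)
        have pb' : b ∈ Zsub (ι a + 1) := memZ _ b hb ((hub b).trans (hpow_le (by omega)))
        have hφb_eq := hφa b hb hb0 (ι a) hc pb pb'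
        set u := E (ι a) (lam a • (⟨a, pa⟩ : Zsub (ι a)) - lam b • ⟨b, pb⟩) with hu
        set v := E (ι a + 1) (mu a • (⟨a, pa'⟩ : Zsub (ι a + 1)) - mu b • ⟨b, pb'⟩) with hv
        have hdiff : φ a - φ b = u + v := by
          rw [hφa_eq, hφb_eq, hu, hv]
          simp only [map_sub, map_smul]
          abel
        have hun : ‖u‖ = ‖lam a • a - lam b • b‖ := by rw [hu, hEiso]; rfl
        have hvn : ‖v‖ = ‖mu a • a - mu b • b‖ := by rw [hv, hEiso]; rfl
        obtain ⟨e1, e2, -, -⟩ := four_comp_norm_le Ysub hmono (ι a) (ι a + 1) (ι a + 2)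
          (ι a + 3) (by omega) (by omega) (by omega) u v 0 0 (hErange _ _) (hErange _ _)
          (zero_mem _) (zero_mem _)
        rw [add_zero, add_zero] at e1 e2
        have hid : (lam a • a - lam b • b) + (mu a • a - mu b • b) = a - b := by
          have hmod : (lam a • a - lam b • b) + (mu a • a - mu b • b)
              = (lam a + mu a) • a - (lam b + mu b) • b := by module
          rw [hmod, hsa, hsb, one_smul, one_smul]
        have t2 := norm_add_le (lam a • a - lam b • b) (mu a • a - mu b • b)
        rw [hid] at t2
        have hbound : ∀ s t : ℝ, 0 ≤ s → (s - t = (‖b‖ - ‖a‖) / 2 ^ (ι a - 1) ∨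
            s - t = (‖a‖ - ‖b‖) / 2 ^ (ι a - 1)) →
            ‖s • a - t • b‖ ≤ s * ‖a - b‖ + 2 * ‖a - b‖ := by
          intro s t hs hst
          have hrw : s • a - t • b = s • (a - b) + (s - t) • b := by module
          have habs2 : |s - t| ≤ ‖a - b‖ / 2 ^ (ι a - 1) := by
            rcases hst with h | h
            · rw [h, abs_div, abs_of_pos hd]
              gcongr
              rw [abs_sub_comm]
              exact habs
            · rw [h, abs_div, abs_of_pos hd]
              gcongr
          have hb2 : ‖b‖ ≤ 2 ^ (ι a - 1) * 2 := by
            rw [← hDa, ← hc]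
            exact h2b
          calc ‖s • a - t • b‖ = ‖s • (a - b) + (s - t) • b‖ := by rw [hrw]
            _ ≤ ‖s • (a - b)‖ + ‖(s - t) • b‖ := norm_add_le _ _
            _ = s * ‖a - b‖ + |s - t| * ‖b‖ := by
                rw [norm_smul, norm_smul, Real.norm_eq_abs, Real.norm_eq_abs,
                  abs_of_nonneg hs]
            _ ≤ s * ‖a - b‖ + (‖a - b‖ / 2 ^ (ι a - 1)) * (2 ^ (ι a - 1) * 2) := by
                exact add_le_add le_rfl
                  (mul_le_mul habs2 hb2 (norm_nonneg b) (by positivity))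
            _ = s * ‖a - b‖ + 2 * ‖a - b‖ := by
                congr 1
                field_simp
        have hdiffl : lam a - lam b = (‖b‖ - ‖a‖) / 2 ^ (ι a - 1) := by
          simp only [hlamdef]
          rw [hc, div_sub_div_same]
          congr 1
          ring
        have hdiffm : mu a - mu b = (‖a‖ - ‖b‖) / 2 ^ (ι a - 1) := by
          simp only [hmudef]
          rw [hc, div_sub_div_same]
          congr 1
          ring
        have hua := hbound (lam a) (lam b) la0 (Or.inl hdiffl)
        have hva := hbound (mu a) (mu b) ma0 (Or.inr hdiffm)
        have hsplit : lam a * ‖a - b‖ + mu a * ‖a - b‖ = ‖a - b‖ := by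
          rw [← add_mul, hsa, one_mul]
        constructor
        · rw [hdiff]
          linarith [e1, e2, t2, hun, hvn]
        · have t3 := norm_add_le u v
          rw [hdiff]
          linarith [hun, hvn, hua, hva]
      · -- adjacent shells
        have pb : b ∈ Zsub (ι a + 1) := memZ _ b hb (by rw [← hc]; exact h2b)
        have pb' : b ∈ Zsub (ι a + 1 + 1) := memZ _ b hb ((hub b).trans (hpow_le (by omega)))
        have hφb_eq := hφa b hb hb0 (ι a + 1) hc pb pb'
        set u := E (ι a) (lam a • (⟨a, pa⟩ : Zsub (ι a))) with hu
        set v := E (ι a + 1) (mu a • (⟨a, pa'⟩ : Zsub (ι a + 1)) - lam b • ⟨b, pb⟩) with hv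
        set w := E (ι a + 1 + 1) (-(mu b • (⟨b, pb'⟩ : Zsub (ι a + 1 + 1)))) with hw
        have hdiff : φ a - φ b = u + v + w := by
          rw [hφa_eq, hφb_eq, hu, hv, hw]
          simp only [map_sub, map_smul, map_neg]
          abel
        have hun : ‖u‖ = lam a * ‖a‖ := by
          rw [hu, hEiso]
          rw [show ((lam a • (⟨a, pa⟩ : Zsub (ι a)) : Zsub (ι a)) : Z) = lam a • a from rfl]
          rw [norm_smul, Real.norm_eq_abs, abs_of_nonneg la0]
        have hvn : ‖v‖ = ‖mu a • a - lam b • b‖ := by rw [hv, hEiso]; rfl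
        have hwn : ‖w‖ = mu b * ‖b‖ := by
          rw [hw, hEiso]
          rw [show ((-(mu b • (⟨b, pb'⟩ : Zsub (ι a + 1 + 1))) : Zsub (ι a + 1 + 1)) : Z)
            = -(mu b • b) from rfl]
          rw [norm_neg, norm_smul, Real.norm_eq_abs, abs_of_nonneg mb0]
        obtain ⟨e1, e2, e3, -⟩ := four_comp_norm_le Ysub hmono (ι a) (ι a + 1)
          (ι a + 1 + 1) (ι a + 3) (by omega) (by omega) (by omega) u v w 0
          (hErange _ _) (hErange _ _) (hErange _ _) (zero_mem _)
        rw [add_zero] at e1 e2 e3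
        have hid : lam a • a + (mu a • a - lam b • b) + (-(mu b • b)) = a - b := by
          have hmod : lam a • a + (mu a • a - lam b • b) + (-(mu b • b))
              = (lam a + mu a) • a - (lam b + mu b) • b := by module
          rw [hmod, hsa, hsb, one_smul, one_smul]
        have hsm1 : ‖lam a • a‖ = lam a * ‖a‖ := by
          rw [norm_smul, Real.norm_eq_abs, abs_of_nonneg la0]
        have hsm3 : ‖-(mu b • b)‖ = mu b * ‖b‖ := by
          rw [norm_neg, norm_smul, Real.norm_eq_abs, abs_of_nonneg mb0]
        -- numeric facts for adjacent shells
        have hDb : (2:ℝ) ^ (ι b - 1) = 2 ^ (ι a) := by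
          rw [show ι b - 1 = ι a by omega]
        have hDb2 : (2:ℝ) ^ (ι b) = 2 ^ (ι a) * 2 := by
          rw [hc, zpow_add_one₀ (by norm_num : (2:ℝ) ≠ 0)]
        have hbub : ‖b‖ ≤ 2 ^ (ι a) * 2 := by rw [← hDb2]; exact h2b
        have hblb : (2:ℝ) ^ (ι a) < ‖b‖ := by rw [← hDb]; exact h1b
        constructor
        · -- lower bound
          have t1 := norm_add_le (lam a • a + (mu a • a - lam b • b)) (-(mu b • b))
          have t2 := norm_add_le (lam a • a) (mu a • a - lam b • b)
          rw [hid] at t1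
          rw [hdiff]
          linarith [e1, e2, e3, hun, hvn, hwn, hsm1, hsm3]
        · -- upper bound
          have bu : ‖u‖ ≤ 2 * ‖a - b‖ := by
            rw [hun]
            have k1 : lam a * ‖a‖ ≤ lam a * (2 ^ (ι a - 1) * 2) := by
              apply mul_le_mul_of_nonneg_left _ la0
              rw [← hDa]
              exact h2a
            have k2 : lam a * (2 ^ (ι a - 1) * 2) = 2 * (2 ^ (ι a) - ‖a‖) := by
              simp only [hlamdef]
              field_simp
            linarith
          have bw : ‖w‖ ≤ 2 * ‖a - b‖ := by
            rw [hwn]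
            have hmub : mu b * (2 ^ (ι a)) = ‖b‖ - 2 ^ (ι a) := by
              simp only [hmudef]
              rw [hDb]
              field_simp
            have k1 : mu b * ‖b‖ ≤ mu b * (2 ^ (ι a) * 2) :=
              mul_le_mul_of_nonneg_left hbub mb0
            have k2 : mu b * (2 ^ (ι a) * 2) = 2 * (‖b‖ - 2 ^ (ι a)) := by
              calc mu b * (2 ^ (ι a) * 2) = (mu b * 2 ^ (ι a)) * 2 := by ring
                _ = 2 * (‖b‖ - 2 ^ (ι a)) := by rw [hmub]; ring
            linarith
          have bv : ‖v‖ ≤ 7 * ‖a - b‖ := by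
            rw [hvn]
            set P := mu a - lam b with hP
            have hrw : mu a • a - lam b • b = mu a • (a - b) + P • b := by
              rw [hP]
              module
            have hPD : P * (2 ^ (ι a)) = 2 * ‖a‖ + ‖b‖ - 3 * 2 ^ (ι a) := by
              simp only [hP, hmudef, hlamdef]
              rw [hDb, hDb2, hDa]
              field_simp
              ring
            have hPub : P * (2 ^ (ι a)) ≤ 3 * (‖b‖ - ‖a‖) := by
              rw [hPD]
              linarith
            have hPlb : -(3 * (‖b‖ - ‖a‖)) ≤ P * (2 ^ (ι a)) := by
              rw [hPD]
              linarith
            have hPabs : |P| * 2 ^ (ι a) ≤ 3 * (‖b‖ - ‖a‖) := by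
              calc |P| * 2 ^ (ι a) = |P| * |(2:ℝ) ^ (ι a)| := by rw [abs_of_pos hD]
                _ = |P * 2 ^ (ι a)| := (abs_mul _ _).symm
                _ ≤ 3 * (‖b‖ - ‖a‖) := abs_le.mpr ⟨hPlb, hPub⟩
            have hPb : |P| * ‖b‖ ≤ 6 * ‖a - b‖ := by
              have k1 : |P| * ‖b‖ ≤ |P| * (2 ^ (ι a) * 2) :=
                mul_le_mul_of_nonneg_left hbub (abs_nonneg P)
              have k2 : |P| * (2 ^ (ι a) * 2) = (|P| * 2 ^ (ι a)) * 2 := by ring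
              linarith
            have hma1 : mu a ≤ 1 := by linarith
            have k3 : mu a * ‖a - b‖ ≤ 1 * ‖a - b‖ := mul_le_mul_of_nonneg_right hma1 ht0
            calc ‖mu a • a - lam b • b‖ = ‖mu a • (a - b) + P • b‖ := by rw [hrw]
              _ ≤ ‖mu a • (a - b)‖ + ‖P • b‖ := norm_add_le _ _
              _ = mu a * ‖a - b‖ + |P| * ‖b‖ := by
                  rw [norm_smul, norm_smul, Real.norm_eq_abs, Real.norm_eq_abs,
                    abs_of_nonneg ma0]
              _ ≤ 7 * ‖a - b‖ := by linarith
          have t1 := norm_add_le (u + v) w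
          have t2 := norm_add_le u v
          rw [hdiff]
          linarith
      · -- distant shells
        have pb : b ∈ Zsub (ι b) := memZ _ b hb h2b
        have pb' : b ∈ Zsub (ι b + 1) := memZ _ b hb ((hub b).trans (hpow_le (by omega)))
        have hφb_eq := hφa b hb hb0 (ι b) rfl pb pb'
        set u := E (ι a) (lam a • (⟨a, pa⟩ : Zsub (ι a))) with hu
        set v := E (ι a + 1) (mu a • (⟨a, pa'⟩ : Zsub (ι a + 1))) with hv
        set w := E (ι b) (-(lam b • (⟨b, pb⟩ : Zsub (ι b)))) with hw
        set x := E (ι b + 1) (-(mu b • (⟨b, pb'⟩ : Zsub (ι b + 1)))) with hx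
        have hdiff : φ a - φ b = u + v + w + x := by
          rw [hφa_eq, hφb_eq, hu, hv, hw, hx]
          simp only [map_smul, map_neg]
          abel
        have hun : ‖u‖ = lam a * ‖a‖ := by
          rw [hu, hEiso]
          rw [show ((lam a • (⟨a, pa⟩ : Zsub (ι a)) : Zsub (ι a)) : Z) = lam a • a from rfl]
          rw [norm_smul, Real.norm_eq_abs, abs_of_nonneg la0]
        have hvn : ‖v‖ = mu a * ‖a‖ := by
          rw [hv, hEiso]
          rw [show ((mu a • (⟨a, pa'⟩ : Zsub (ι a + 1)) : Zsub (ι a + 1)) : Z)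
            = mu a • a from rfl]
          rw [norm_smul, Real.norm_eq_abs, abs_of_nonneg ma0]
        have hwn : ‖w‖ = lam b * ‖b‖ := by
          rw [hw, hEiso]
          rw [show ((-(lam b • (⟨b, pb⟩ : Zsub (ι b))) : Zsub (ι b)) : Z)
            = -(lam b • b) from rfl]
          rw [norm_neg, norm_smul, Real.norm_eq_abs, abs_of_nonneg lb0]
        have hxn : ‖x‖ = mu b * ‖b‖ := by
          rw [hx, hEiso]
          rw [show ((-(mu b • (⟨b, pb'⟩ : Zsub (ι b + 1))) : Zsub (ι b + 1)) : Z)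
            = -(mu b • b) from rfl]
          rw [norm_neg, norm_smul, Real.norm_eq_abs, abs_of_nonneg mb0]
        obtain ⟨e1, e2, e3, e4⟩ := four_comp_norm_le Ysub hmono (ι a) (ι a + 1) (ι b)
          (ι b + 1) (by omega) (by omega) (by omega) u v w x
          (hErange _ _) (hErange _ _) (hErange _ _) (hErange _ _)
        have key2 : 2 * ‖a‖ ≤ ‖b‖ := by
          have q2 : (2:ℝ) ^ (ι a) * 2 = 2 ^ (ι a + 1) :=
            (zpow_add_one₀ (by norm_num : (2:ℝ) ≠ 0) _).symm
          have q3 : (2:ℝ) ^ (ι a + 1) ≤ 2 ^ (ι b - 1) := hpow_le (by omega)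
          linarith
        have gb : lam b * ‖b‖ + mu b * ‖b‖ = ‖b‖ := by
          rw [← add_mul, hsb, one_mul]
        have ga : lam a * ‖a‖ + mu a * ‖a‖ = ‖a‖ := by
          rw [← add_mul, hsa, one_mul]
        have htab : ‖a - b‖ ≤ ‖a‖ + ‖b‖ := norm_sub_le a b
        constructor
        · -- lower bound
          rw [hdiff]
          have h0a : 0 ≤ ‖a‖ := norm_nonneg a
          linarith [e3, e4, hwn, hxn]
        · -- upper bound
          have t1 := norm_add_le (u + v + w) x
          have t2 := norm_add_le (u + v) w
          have t3 := norm_add_le u v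
          rw [hdiff]
          linarith [hun, hvn, hwn, hxn]
    -- assemble
    intro a ha b hb
    by_cases ha0 : a = 0
    · subst ha0
      rw [hφzero 0 (by simp), zero_sub, norm_neg, zero_sub, norm_neg]
      by_cases hb0 : b = 0
      · subst hb0
        rw [hφzero 0 (by simp)]
        simp
      · exact ⟨by linarith [lower2 b hb hb0, norm_nonneg (φ b)],
          by linarith [hφnorm b hb, norm_nonneg b]⟩
    · by_cases hb0 : b = 0
      · subst hb0
        rw [hφzero 0 (by simp), sub_zero, sub_zero]
        exact ⟨by linarith [lower2 a ha ha0, norm_nonneg (φ a)],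
          by linarith [hφnorm a ha, norm_nonneg a]⟩
      · rcases le_total (ι a) (ι b) with h | h
        · exact main a ha b hb ha0 hb0 h
        · have hm := main b hb a ha hb0 ha0 h
          rw [norm_sub_rev b a, norm_sub_rev (φ b) (φ a)] at hm
          exact hm
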